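/- Let W_1,…,W_N be M×M skew-symmetric matrices supported on mutually disjoint index blocks with ‖W_t‖_op ≤ 1 for each t, and let X be an M×2N matrix with ‖X‖_op ≤ L. Then for every sign vector b ∈ {±1}^N, |pf(Xᵀ(∑_{t=1}^N b_t W_t)X)| ≤ L^{2N}. -/

import Mathlib

open scoped BigOperators
open Matrix

noncomputable section

/-- The Pfaffian of a `2N × 2N` matrix, via the permutation-sum formula. -/
noncomputable def pfaffian (N : ℕ) (A : Matrix (Fin (2 * N)) (Fin (2 * N)) ℂ) : ℂ :=
  (1 / (2 ^ N * (N.factorial : ℂ))) *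
    ∑ σ : Equiv.Perm (Fin (2 * N)), (Equiv.Perm.sign σ : ℤ) *
      ∏ i : Fin N, A (σ ⟨2 * (i : ℕ), by omega⟩) (σ ⟨2 * (i : ℕ) + 1, by omega⟩)

/-- The ℓ²→ℓ² operator norm of a (possibly rectangular) complex matrix. -/
noncomputable def opNorm {m n : Type*} [Fintype m] [Fintype n] [DecidableEq n]
    (A : Matrix m n ℂ) : ℝ :=
  ‖LinearMap.toContinuousLinearMap (Matrix.toEuclideanLin A)‖

/-- `W` is supported on the index block `S`: all entries outside `S × S` vanish. -/
def SupportedOn {M : ℕ} (S : Finset (Fin M)) (W : Matrix (Fin M) (Fin M) ℂ) : Prop :=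
  ∀ i j, (i ∉ S ∨ j ∉ S) → W i j = 0

namespace PfAux

/-- pairing equivalence -/
def pe (N : ℕ) : Fin N × Fin 2 ≃ Fin (2 * N) where
  toFun p := ⟨2 * p.1.1 + p.2.1, by omega⟩
  invFun j := (⟨j.1 / 2, by omega⟩, ⟨j.1 % 2, by omega⟩)
  left_inv := by rintro ⟨⟨i, hi⟩, ⟨s, hs⟩⟩; simp only [Prod.mk.injEq, Fin.ext_iff]; omega
  right_inv := by rintro ⟨j, hj⟩; simp only [Fin.ext_iff]; omega

@[simp] lemma pe_val (N : ℕ) (p : Fin N × Fin 2) : (pe N p).1 = 2 * p.1.1 + p.2.1 := rfl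
@[simp] lemma pe_symm_fst (N : ℕ) (j : Fin (2*N)) : ((pe N).symm j).1.1 = j.1 / 2 := rfl
@[simp] lemma pe_symm_snd (N : ℕ) (j : Fin (2*N)) : ((pe N).symm j).2.1 = j.1 % 2 := rfl

/-- the unnormalized Pfaffian sum -/
def sPf (N : ℕ) (A : Matrix (Fin (2 * N)) (Fin (2 * N)) ℂ) : ℂ :=
  ∑ σ : Equiv.Perm (Fin (2 * N)), (Equiv.Perm.sign σ : ℤ) *
      ∏ i : Fin N, A (σ (pe N (i, 0))) (σ (pe N (i, 1)))

lemma pfaffian_eq_sPf (N : ℕ) (A : Matrix (Fin (2 * N)) (Fin (2 * N)) ℂ) :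
    pfaffian N A = (1 / (2 ^ N * (N.factorial : ℂ))) * sPf N A := rfl

/-- the `J`-pattern entry function -/
def Jv (i j : ℕ) : ℂ :=
  if i + 1 = j ∧ i % 2 = 0 then 1 else if j + 1 = i ∧ j % 2 = 0 then -1 else 0

def Jmat (N : ℕ) : Matrix (Fin (2 * N)) (Fin (2 * N)) ℂ := of fun i j => Jv i.1 j.1

def J2 : Matrix (Fin 2) (Fin 2) ℂ := of fun i j => Jv i.1 j.1

lemma Jmat_transpose (N : ℕ) : (Jmat N)ᵀ = -(Jmat N) := by
  ext i j
  simp only [transpose_apply, Jmat, of_apply, Matrix.neg_apply, Jv]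
  split_ifs <;> first | rfl | omega | simp | (exfalso; omega)

/-- the block-splitting equivalence -/
def ee (n : ℕ) : Fin (2 * (n + 1)) ≃ (Fin 2 ⊕ Fin (2 * n)) where
  toFun i := if h : i.1 < 2 then .inl ⟨i.1, h⟩ else .inr ⟨i.1 - 2, by omega⟩
  invFun s := Sum.elim (fun i => ⟨i.1, by omega⟩) (fun j => ⟨j.1 + 2, by omega⟩) s
  left_inv := by
    intro i
    by_cases h : i.1 < 2
    · simp only [dif_pos h]; simp [Fin.ext_iff]
    · simp only [dif_neg h]; simp only [Sum.elim_inr, Sum.elim_inl, Fin.ext_iff]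
      omega
  right_inv := by
    rintro (i | j)
    · simp only [Sum.elim_inl]
      exact dif_pos i.2
    · simp only [Sum.elim_inr]
      refine (dif_neg (by simp)).trans ?_
      simp only [Sum.inr.injEq, Fin.ext_iff]; omega

lemma fromBlocks_ee (n : ℕ) :
    (fromBlocks J2 0 0 (Jmat n)).submatrix (ee n) (ee n) = Jmat (n + 1) := by
  ext i j
  simp only [submatrix_apply, ee, Equiv.coe_fn_mk]
  by_cases hi : i.1 < 2 <;> by_cases hj : j.1 < 2
  · simp only [dif_pos hi, dif_pos hj, fromBlocks_apply₁₁, J2, Jmat, of_apply, Jv]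
  · simp only [dif_pos hi, dif_neg hj, fromBlocks_apply₁₂, Jmat, of_apply, Matrix.zero_apply, Jv]
    split_ifs <;> first | rfl | (exfalso; omega)
  · simp only [dif_neg hi, dif_pos hj, fromBlocks_apply₂₁, Jmat, of_apply, Matrix.zero_apply, Jv]
    split_ifs <;> first | rfl | (exfalso; omega)
  · simp only [dif_neg hi, dif_neg hj, fromBlocks_apply₂₂, Jmat, of_apply, Jv]
    split_ifs <;> first | rfl | (exfalso; omega)

/-- functions `Fin 2N → K` as pair-functions -/
def fe (N : ℕ) : (Fin (2 * N) → Fin (2 * N)) ≃ (Fin N → Fin (2 * N) × Fin (2 * N)) where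
  toFun G := fun i => (G (pe N (i, 0)), G (pe N (i, 1)))
  invFun F := fun j =>
    if ((pe N).symm j).2 = 0 then (F ((pe N).symm j).1).1 else (F ((pe N).symm j).1).2
  left_inv G := by
    funext j
    by_cases h : ((pe N).symm j).2 = 0
    · simp only [if_pos h]
      congr 1
      rw [show (((pe N).symm j).1, (0 : Fin 2)) = (pe N).symm j from Prod.ext rfl h.symm,
        Equiv.apply_symm_apply]
    · simp only [if_neg h]
      have h1 : ((pe N).symm j).2 = 1 := by
        have h2 := (((pe N).symm j).2).2
        rw [Fin.ext_iff] at h ⊢; omega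
      congr 1
      rw [show (((pe N).symm j).1, (1 : Fin 2)) = (pe N).symm j from Prod.ext rfl h1.symm,
        Equiv.apply_symm_apply]
  right_inv F := by
    funext i
    have h0 : (pe N).symm (pe N (i, 0)) = (i, 0) := Equiv.symm_apply_apply _ _
    have h1 : (pe N).symm (pe N (i, 1)) = (i, 1) := Equiv.symm_apply_apply _ _
    simp [h0, h1]

theorem sPf_conj (N : ℕ) (U A : Matrix (Fin (2 * N)) (Fin (2 * N)) ℂ) :
    sPf N (Uᵀ * A * U) = U.det * sPf N A := by
  classical
  have entry : ∀ a b, (Uᵀ * A * U) a b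
      = ∑ kl : Fin (2 * N) × Fin (2 * N), U kl.1 a * A kl.1 kl.2 * U kl.2 b := by
    intro a b
    rw [Matrix.mul_apply]
    simp_rw [Matrix.mul_apply, Matrix.transpose_apply, Finset.sum_mul]
    rw [Finset.sum_comm, Fintype.sum_prod_type]
  have hzero : ∀ G : Fin (2 * N) → Fin (2 * N), ¬ Function.Bijective G →
      (U.submatrix G id).det = 0 := by
    intro G hG
    obtain ⟨i, j, hGij, hij⟩ : ∃ i j, G i = G j ∧ i ≠ j := by
      rw [← Finite.injective_iff_bijective, Function.Injective] at hG
      push_neg at hG; exact hG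
    exact Matrix.det_zero_of_row_eq hij (funext fun b => by
      simp [Matrix.submatrix_apply, hGij])
  have hdet : ∀ G : Fin (2 * N) → Fin (2 * N),
      (∑ σ : Equiv.Perm (Fin (2 * N)), ((Equiv.Perm.sign σ : ℤ) : ℂ) * ∏ j, U (G j) (σ j))
        = (U.submatrix G id).det := by
    intro G
    rw [← Matrix.det_transpose, Matrix.det_apply']
    exact Finset.sum_congr rfl fun σ _ => rfl
  calc sPf N (Uᵀ * A * U)
      = ∑ F : Fin N → Fin (2 * N) × Fin (2 * N), ∑ σ : Equiv.Perm (Fin (2 * N)),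
          ((Equiv.Perm.sign σ : ℤ) : ℂ) * ∏ i : Fin N,
            (U (F i).1 (σ (pe N (i, 0))) * A (F i).1 (F i).2 * U (F i).2 (σ (pe N (i, 1)))) := by
        unfold sPf
        simp only [entry, Finset.prod_univ_sum, Finset.mul_sum, Fintype.piFinset_univ]
        rw [Finset.sum_comm]
    _ = ∑ G : Fin (2 * N) → Fin (2 * N), ∑ σ : Equiv.Perm (Fin (2 * N)),
          ((Equiv.Perm.sign σ : ℤ) : ℂ) * ∏ i : Fin N,
            (U (G (pe N (i, 0))) (σ (pe N (i, 0))) * A (G (pe N (i, 0))) (G (pe N (i, 1)))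
              * U (G (pe N (i, 1))) (σ (pe N (i, 1)))) :=
        (Fintype.sum_equiv (fe N) _ _ (fun G => rfl)).symm
    _ = ∑ G : Fin (2 * N) → Fin (2 * N),
          (∏ i : Fin N, A (G (pe N (i, 0))) (G (pe N (i, 1)))) * (U.submatrix G id).det := by
        refine Finset.sum_congr rfl fun G _ => ?_
        rw [← hdet G, Finset.mul_sum]
        refine Finset.sum_congr rfl fun σ _ => ?_
        have hsplit : (∏ i : Fin N,
            (U (G (pe N (i, 0))) (σ (pe N (i, 0))) * A (G (pe N (i, 0))) (G (pe N (i, 1)))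
              * U (G (pe N (i, 1))) (σ (pe N (i, 1)))))
            = (∏ i : Fin N, A (G (pe N (i, 0))) (G (pe N (i, 1))))
              * ∏ i : Fin N, (U (G (pe N (i, 0))) (σ (pe N (i, 0)))
                * U (G (pe N (i, 1))) (σ (pe N (i, 1)))) := by
          rw [← Finset.prod_mul_distrib]
          exact Finset.prod_congr rfl fun i _ => by ring
        have hpair : (∏ i : Fin N, (U (G (pe N (i, 0))) (σ (pe N (i, 0)))
              * U (G (pe N (i, 1))) (σ (pe N (i, 1)))))
            = ∏ j, U (G j) (σ j) := by
          rw [← Equiv.prod_comp (pe N) (fun j => U (G j) (σ j)), Fintype.prod_prod_type]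
          refine Finset.prod_congr rfl fun i _ => ?_
          rw [Fin.prod_univ_two]
        rw [hsplit, hpair]; ring
    _ = ∑ G ∈ Finset.univ.filter (fun G : Fin (2 * N) → Fin (2 * N) => Function.Bijective G),
          (∏ i : Fin N, A (G (pe N (i, 0))) (G (pe N (i, 1)))) * (U.submatrix G id).det :=
        (Finset.sum_subset (Finset.filter_subset _ _) fun G _ hG => by
          rw [hzero G (by simpa using hG), mul_zero]).symm
    _ = ∑ τ : Equiv.Perm (Fin (2 * N)),
          (∏ i : Fin N, A (τ (pe N (i, 0))) (τ (pe N (i, 1)))) * (U.submatrix τ id).det :=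
        Finset.sum_bij (fun p h => Equiv.ofBijective p (Finset.mem_filter.1 h).2)
          (fun _ _ => Finset.mem_univ _)
          (fun _ _ _ _ h => by injection h)
          (fun b _ => ⟨b, Finset.mem_filter.2 ⟨Finset.mem_univ _, b.bijective⟩,
            Equiv.coe_fn_injective rfl⟩) (fun _ _ => rfl)
    _ = U.det * sPf N A := by
        unfold sPf
        rw [Finset.mul_sum]
        refine Finset.sum_congr rfl fun τ _ => ?_
        rw [Matrix.det_permute]
        push_cast
        ring

lemma sPf_eq_zero_of_row_col (N : ℕ) (A : Matrix (Fin (2 * N)) (Fin (2 * N)) ℂ) (k : Fin (2 * N))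
    (hrow : ∀ j, A k j = 0) (hcol : ∀ i, A i k = 0) : sPf N A = 0 := by
  unfold sPf
  apply Finset.sum_eq_zero
  intro σ _
  set p := (pe N).symm (σ⁻¹ k) with hp
  have hpe : σ (pe N p) = k := by
    rw [hp, Equiv.apply_symm_apply]; exact Equiv.apply_symm_apply σ k
  have h2 : p.2.1 = 0 ∨ p.2.1 = 1 := by omega
  rcases h2 with h2 | h2
  · have hP : (p.1, (0 : Fin 2)) = p := by
      refine Prod.ext rfl ?_
      rw [Fin.ext_iff]; exact h2.symm
    have hz : A (σ (pe N (p.1, 0))) (σ (pe N (p.1, 1))) = 0 := by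
      rw [hP, hpe]; exact hrow _
    rw [Finset.prod_eq_zero (Finset.mem_univ p.1) hz, mul_zero]
  · have hP : (p.1, (1 : Fin 2)) = p := by
      refine Prod.ext rfl ?_
      rw [Fin.ext_iff]; exact h2.symm
    have hz : A (σ (pe N (p.1, 0))) (σ (pe N (p.1, 1))) = 0 := by
      rw [hP, hpe]; exact hcol _
    rw [Finset.prod_eq_zero (Finset.mem_univ p.1) hz, mul_zero]

lemma sPf_eq_zero_of_det_eq_zero (N : ℕ) (A : Matrix (Fin (2 * N)) (Fin (2 * N)) ℂ)
    (hskew : Aᵀ = -A) (hdet : A.det = 0) : sPf N A = 0 := by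
  classical
  obtain ⟨v, hv, hAv⟩ := (Matrix.exists_mulVec_eq_zero_iff).2 hdet
  rcases isEmpty_or_nonempty (Fin (2 * N)) with hemp | hne
  · exact absurd (funext fun i => (hemp.false i).elim) hv
  have hli : LinearIndepOn ℂ id ({v} : Set (Fin (2 * N) → ℂ)) :=
    LinearIndepOn.singleton hv
  let b : Module.Basis _ ℂ (Fin (2 * N) → ℂ) := Module.Basis.extend hli
  haveI : Fintype (hli.extend (Set.subset_univ _)) := FiniteDimensional.fintypeBasisIndex b
  have hvt : v ∈ hli.extend (Set.subset_univ _) :=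
    hli.subset_extend _ (Set.mem_singleton v)
  have hcard : Fintype.card (hli.extend (Set.subset_univ ({v} : Set (Fin (2 * N) → ℂ))))
      = 2 * N := by
    rw [← Module.finrank_eq_card_basis b, Module.finrank_fintype_fun_eq_card,
      Fintype.card_fin]
  let e : Fin (2 * N) ≃ hli.extend (Set.subset_univ _) := (Fintype.equivFinOfCardEq hcard).symm
  let k₀ : Fin (2 * N) := Classical.arbitrary _
  let j₁ := e.symm ⟨v, hvt⟩
  let e' := (Equiv.swap k₀ j₁).trans e
  let b' := b.reindex e'.symm
  have hb'k : b' k₀ = v := by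
    rw [Module.Basis.reindex_apply]
    have : e' k₀ = ⟨v, hvt⟩ := by
      show e ((Equiv.swap k₀ j₁) k₀) = ⟨v, hvt⟩
      rw [Equiv.swap_apply_left]
      exact e.apply_symm_apply _
    rw [Equiv.symm_symm, this]
    exact Module.Basis.extend_apply_self hli _
  let U : Matrix (Fin (2 * N)) (Fin (2 * N)) ℂ := (Pi.basisFun ℂ (Fin (2 * N))).toMatrix ⇑b'
  have hU : IsUnit U.det := by
    have hmul : U * (b'.toMatrix ⇑(Pi.basisFun ℂ (Fin (2 * N)))) = 1 :=
      Module.Basis.toMatrix_mul_toMatrix_flip _ _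
    exact IsUnit.of_mul_eq_one _ (by rw [← Matrix.det_mul, hmul, Matrix.det_one])
  have hUcol : ∀ l, U l k₀ = v l := by
    intro l
    show (Pi.basisFun ℂ (Fin (2 * N))).repr (b' k₀) l = v l
    rw [hb'k, Pi.basisFun_repr]
  have hMskew : (Uᵀ * A * U)ᵀ = -(Uᵀ * A * U) := by
    calc (Uᵀ * A * U)ᵀ = Uᵀ * (Aᵀ * U) := by
          rw [Matrix.transpose_mul, Matrix.transpose_mul, Matrix.transpose_transpose]
      _ = -(Uᵀ * A * U) := by rw [hskew, Matrix.neg_mul, Matrix.mul_neg, Matrix.mul_assoc]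
  have hcol : ∀ i, (Uᵀ * A * U) i k₀ = 0 := by
    intro i
    have h1 : (Uᵀ * A * U) i k₀ = ((Uᵀ * A) *ᵥ v) i := by
      rw [Matrix.mul_apply]
      simp only [Matrix.mulVec, dotProduct]
      exact Finset.sum_congr rfl fun l _ => by rw [hUcol l]
    rw [h1, ← Matrix.mulVec_mulVec, hAv, Matrix.mulVec_zero]
    rfl
  have hrow : ∀ jj, (Uᵀ * A * U) k₀ jj = 0 := by
    intro jj
    have := congrFun (congrFun hMskew jj) k₀
    rw [Matrix.transpose_apply, Matrix.neg_apply] at this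
    rw [this, hcol jj, neg_zero]
  have h0 : sPf N (Uᵀ * A * U) = 0 := sPf_eq_zero_of_row_col N _ k₀ hrow hcol
  rw [sPf_conj] at h0
  rcases mul_eq_zero.1 h0 with h | h
  · exact absurd h hU.ne_zero
  · exact h

lemma det_J2 : J2.det = 1 := by
  norm_num [J2, Jv, Matrix.det_fin_two]

lemma skew_diag {ι : Type*} (B : Matrix ι ι ℂ) (h : Bᵀ = -B) (x : ι) : B x x = 0 := by
  have h1 := congrFun (congrFun h x) x
  rw [Matrix.transpose_apply, Matrix.neg_apply] at h1
  linear_combination h1 / 2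

lemma conj_skew {ι : Type*} [Fintype ι] (U B : Matrix ι ι ℂ) (h : Bᵀ = -B) :
    (Uᵀ * B * U)ᵀ = -(Uᵀ * B * U) := by
  calc (Uᵀ * B * U)ᵀ = Uᵀ * (Bᵀ * U) := by
        rw [Matrix.transpose_mul, Matrix.transpose_mul, Matrix.transpose_transpose]
    _ = -(Uᵀ * B * U) := by rw [h, Matrix.neg_mul, Matrix.mul_neg, Matrix.mul_assoc]

lemma conj_conj {ι : Type*} [Fintype ι] (U V B : Matrix ι ι ℂ) :
    (U * V)ᵀ * B * (U * V) = Vᵀ * (Uᵀ * B * U) * V := by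
  simp only [Matrix.transpose_mul, Matrix.mul_assoc]

lemma perm_conj {ι : Type*} [Fintype ι] [DecidableEq ι] (π : Equiv.Perm ι) (B : Matrix ι ι ℂ) :
    ((1 : Matrix ι ι ℂ).submatrix id ⇑π)ᵀ * B * ((1 : Matrix ι ι ℂ).submatrix id ⇑π)
      = B.submatrix ⇑π ⇑π := by
  ext i j
  simp [Matrix.mul_apply, Matrix.submatrix_apply, Matrix.transpose_apply, Matrix.one_apply]

lemma perm_det {ι : Type*} [Fintype ι] [DecidableEq ι] (π : Equiv.Perm ι) :
    IsUnit ((1 : Matrix ι ι ℂ).submatrix id ⇑π).det := by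
  rw [Matrix.det_permute', Matrix.det_one, mul_one]
  rcases Int.units_eq_one_or (Equiv.Perm.sign π) with h | h <;> rw [h] <;> simp

theorem skew_normal : ∀ (n : ℕ) (A : Matrix (Fin (2 * n)) (Fin (2 * n)) ℂ), Aᵀ = -A →
    IsUnit A.det →
    ∃ U : Matrix (Fin (2 * n)) (Fin (2 * n)) ℂ, IsUnit U.det ∧ Uᵀ * A * U = Jmat n := by
  intro n
  induction n with
  | zero =>
    intro A _ _
    exact ⟨1, by simp, by ext i j; exact absurd i.2 (by omega)⟩
  | succ n ih =>
    intro A hskew hdet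
    set e : Fin (2 * (n + 1)) ≃ (Fin 2 ⊕ Fin (2 * n)) := ee n with he
    set A' : Matrix (Fin 2 ⊕ Fin (2 * n)) (Fin 2 ⊕ Fin (2 * n)) ℂ :=
      A.submatrix ⇑e.symm ⇑e.symm with hA'
    have hA'skew : A'ᵀ = -A' := by
      rw [hA', Matrix.transpose_submatrix, hskew]
      ext i j
      simp [Matrix.submatrix_apply]
    have hA'det : IsUnit A'.det := by
      rw [hA', Matrix.det_submatrix_equiv_self]; exact hdet
    have hpiv : ∃ k, A' (Sum.inl 0) k ≠ 0 ∧ k ≠ Sum.inl 0 := by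
      by_contra hcon
      push_neg at hcon
      have hrow : ∀ k, A' (Sum.inl 0) k = 0 := by
        intro k
        by_cases hk : k = Sum.inl 0
        · rw [hk]; exact skew_diag A' hA'skew _
        · by_contra h0; exact hk (hcon k h0)
      exact (isUnit_iff_ne_zero.1 hA'det) (Matrix.det_eq_zero_of_row_eq_zero _ hrow)
    obtain ⟨k, hk0, hkne⟩ := hpiv
    set π : Equiv.Perm (Fin 2 ⊕ Fin (2 * n)) := Equiv.swap (Sum.inl 1) k with hπ
    set U₁ : Matrix (Fin 2 ⊕ Fin (2 * n)) (Fin 2 ⊕ Fin (2 * n)) ℂ :=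
      (1 : Matrix (Fin 2 ⊕ Fin (2 * n)) (Fin 2 ⊕ Fin (2 * n)) ℂ).submatrix id ⇑π with hU₁
    set A₁ := A'.submatrix ⇑π ⇑π with hA₁
    have hU₁conj : U₁ᵀ * A' * U₁ = A₁ := perm_conj π A'
    have hU₁det : IsUnit U₁.det := perm_det π
    have hA₁skew : A₁ᵀ = -A₁ := by rw [← hU₁conj]; exact conj_skew U₁ A' hA'skew
    have hA₁det : IsUnit A₁.det := by rw [hA₁, Matrix.det_submatrix_equiv_self]; exact hA'det
    have hA₁piv : A₁ (Sum.inl 0) (Sum.inl 1) ≠ 0 := by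
      rw [hA₁]
      have h1 : π (Sum.inl 0) = Sum.inl 0 :=
        Equiv.swap_apply_of_ne_of_ne (show (Sum.inl 0 : Fin 2 ⊕ Fin (2 * n)) ≠ Sum.inl 1 by simp) (Ne.symm hkne)
      have h2 : π (Sum.inl 1) = k := Equiv.swap_apply_left _ _
      simpa [Matrix.submatrix_apply, h1, h2] using hk0
    set a := A₁ (Sum.inl 0) (Sum.inl 1) with ha
    set d : (Fin 2 ⊕ Fin (2 * n)) → ℂ := fun x => if x = Sum.inl 1 then a⁻¹ else 1 with hd
    set U₂ := Matrix.diagonal d with hU₂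
    set A₂ := U₂ᵀ * A₁ * U₂ with hA₂
    have hU₂det : IsUnit U₂.det := by
      rw [hU₂, Matrix.det_diagonal, hd]
      rw [Finset.prod_ite_eq' Finset.univ (Sum.inl 1) (fun _ => a⁻¹)]
      simp only [Finset.mem_univ, if_true]
      exact isUnit_iff_ne_zero.mpr (inv_ne_zero hA₁piv)
    have hA₂skew : A₂ᵀ = -A₂ := conj_skew U₂ A₁ hA₁skew
    have hA₂det : IsUnit A₂.det := by
      rw [hA₂, Matrix.det_mul, Matrix.det_mul, Matrix.det_transpose]
      exact (hU₂det.mul hA₁det).mul hU₂det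
    have hA₂app : ∀ i j, A₂ i j = d i * A₁ i j * d j := by
      intro i j
      rw [hA₂, hU₂, Matrix.diagonal_transpose, Matrix.mul_diagonal, Matrix.diagonal_mul]
    have hA₂piv : A₂ (Sum.inl 0) (Sum.inl 1) = 1 := by
      rw [hA₂app, hd]
      simp only [reduceCtorEq, if_false, if_true, Sum.inl.injEq]
      norm_num
      exact mul_inv_cancel₀ hA₁piv
    set C := A₂.toBlocks₁₂ with hC
    set D₀ := A₂.toBlocks₂₂ with hD₀
    have hB11 : A₂.toBlocks₁₁ = J2 := by
      ext i j
      fin_cases i <;> fin_cases j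
      · simpa [Matrix.toBlocks₁₁, J2, Jv] using skew_diag A₂ hA₂skew (Sum.inl 0)
      · simpa [Matrix.toBlocks₁₁, J2, Jv] using hA₂piv
      · have h1 := congrFun (congrFun hA₂skew (Sum.inl 0)) (Sum.inl 1)
        rw [Matrix.transpose_apply, Matrix.neg_apply, hA₂piv] at h1
        simpa [Matrix.toBlocks₁₁, J2, Jv] using h1
      · simpa [Matrix.toBlocks₁₁, J2, Jv] using skew_diag A₂ hA₂skew (Sum.inl 1)
    have h21 : A₂.toBlocks₂₁ = -Cᵀ := by
      ext i j
      have h1 := congrFun (congrFun hA₂skew (Sum.inl j)) (Sum.inr i)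
      rw [Matrix.transpose_apply, Matrix.neg_apply] at h1
      simpa [Matrix.toBlocks₂₁, Matrix.toBlocks₁₂, hC] using h1
    have hA₂blocks : A₂ = fromBlocks J2 C (-Cᵀ) D₀ := by
      rw [← hB11, ← h21, hC, hD₀]
      exact (Matrix.fromBlocks_toBlocks A₂).symm
    have hJ2sq : J2 * J2 = (-1 : Matrix (Fin 2) (Fin 2) ℂ) := by
      ext i j
      fin_cases i <;> fin_cases j <;>
        simp [J2, Jv, Matrix.mul_apply, Fin.sum_univ_two, Matrix.one_apply, Matrix.neg_apply]
    have hJ2T : J2ᵀ = -J2 := by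
      ext i j
      fin_cases i <;> fin_cases j <;> simp [J2, Jv, Matrix.neg_apply, Matrix.transpose_apply]
    set F := J2 * C with hF
    set E := Matrix.fromBlocks (1 : Matrix (Fin 2) (Fin 2) ℂ) F 0
      (1 : Matrix (Fin (2 * n)) (Fin (2 * n)) ℂ) with hE
    set D' := -Cᵀ * F + D₀ with hD'
    have hAE : A₂ * E = Matrix.fromBlocks J2 0 (-Cᵀ) D' := by
      rw [hA₂blocks, hE, Matrix.fromBlocks_multiply]
      simp only [Matrix.mul_one, Matrix.one_mul, Matrix.mul_zero, Matrix.zero_mul, add_zero,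
        zero_add]
      have hz : J2 * F + C = 0 := by
        rw [hF, ← Matrix.mul_assoc, hJ2sq, Matrix.neg_mul, Matrix.one_mul, neg_add_cancel]
      rw [hz, ← hD']
    have hA₃ : Eᵀ * A₂ * E = Matrix.fromBlocks J2 0 0 D' := by
      rw [Matrix.mul_assoc, hAE, hE, Matrix.fromBlocks_transpose, Matrix.transpose_one,
        Matrix.transpose_one, Matrix.transpose_zero, Matrix.fromBlocks_multiply]
      simp only [Matrix.mul_one, Matrix.one_mul, Matrix.mul_zero, Matrix.zero_mul, add_zero,
        zero_add]
      have hz : Fᵀ * J2 + -Cᵀ = 0 := by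
        rw [hF, Matrix.transpose_mul, hJ2T, Matrix.mul_neg, Matrix.neg_mul, Matrix.mul_assoc,
          hJ2sq, Matrix.mul_neg, Matrix.mul_one, neg_neg, add_neg_cancel]
      rw [hz]
    have hdetE : E.det = 1 := by
      rw [hE, Matrix.det_fromBlocks_zero₂₁, Matrix.det_one, Matrix.det_one, mul_one]
    have hD'skew : D'ᵀ = -D' := by
      have h := conj_skew E A₂ hA₂skew
      rw [hA₃] at h
      have h22 := congrArg Matrix.toBlocks₂₂ h
      have hngl : Matrix.toBlocks₂₂ (-(Matrix.fromBlocks J2 (0 : Matrix (Fin 2) (Fin (2*n)) ℂ)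
          (0 : Matrix (Fin (2*n)) (Fin 2) ℂ) D')) = -D' := by
        ext i j
        simp [Matrix.toBlocks₂₂, Matrix.neg_apply, Matrix.fromBlocks_apply₂₂]
      rwa [Matrix.fromBlocks_transpose, Matrix.transpose_zero, Matrix.transpose_zero,
        Matrix.toBlocks_fromBlocks₂₂, hngl] at h22
    have hD'det : IsUnit D'.det := by
      have h1 : (Eᵀ * A₂ * E).det = D'.det := by
        rw [hA₃, Matrix.det_fromBlocks_zero₂₁, det_J2, one_mul]
      have h2 : IsUnit (Eᵀ * A₂ * E).det := by
        rw [Matrix.det_mul, Matrix.det_mul, Matrix.det_transpose, hdetE]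
        simpa using hA₂det
      rwa [h1] at h2
    obtain ⟨V', hV'det, hV'⟩ := ih D' hD'skew hD'det
    set G := Matrix.fromBlocks (1 : Matrix (Fin 2) (Fin 2) ℂ) 0 0 V' with hG
    have hGdet : IsUnit G.det := by
      rw [hG, Matrix.det_fromBlocks_zero₂₁, Matrix.det_one, one_mul]; exact hV'det
    have hGconj : Gᵀ * (Eᵀ * A₂ * E) * G = Matrix.fromBlocks J2 0 0 (Jmat n) := by
      rw [hA₃, hG, Matrix.fromBlocks_transpose, Matrix.transpose_one, Matrix.transpose_zero,
        Matrix.transpose_zero, Matrix.fromBlocks_multiply, Matrix.fromBlocks_multiply]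
      simp only [Matrix.mul_one, Matrix.one_mul, Matrix.mul_zero, Matrix.zero_mul, add_zero,
        zero_add]
      rw [hV']
    have hW : (U₁ * (U₂ * (E * G)))ᵀ * A' * (U₁ * (U₂ * (E * G)))
        = Matrix.fromBlocks J2 0 0 (Jmat n) := by
      rw [conj_conj U₁ (U₂ * (E * G)) A', hU₁conj, conj_conj U₂ (E * G) A₁, ← hA₂,
        conj_conj E G A₂, hGconj]
    have hWdet : IsUnit (U₁ * (U₂ * (E * G))).det := by
      rw [Matrix.det_mul, Matrix.det_mul, Matrix.det_mul, hdetE]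
      exact hU₁det.mul (hU₂det.mul (isUnit_one.mul hGdet))
    refine ⟨(U₁ * (U₂ * (E * G))).submatrix ⇑e ⇑e, ?_, ?_⟩
    · rw [Matrix.det_submatrix_equiv_self]; exact hWdet
    · have hA : A = A'.submatrix ⇑e ⇑e := by
        rw [hA']
        ext i j
        simp [Matrix.submatrix_apply]
      calc ((U₁ * (U₂ * (E * G))).submatrix ⇑e ⇑e)ᵀ * A * (U₁ * (U₂ * (E * G))).submatrix ⇑e ⇑e
          = ((U₁ * (U₂ * (E * G)))ᵀ).submatrix ⇑e ⇑e * A'.submatrix ⇑e ⇑e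
            * (U₁ * (U₂ * (E * G))).submatrix ⇑e ⇑e := by
            rw [Matrix.transpose_submatrix, ← hA]
        _ = ((U₁ * (U₂ * (E * G)))ᵀ * A' * (U₁ * (U₂ * (E * G)))).submatrix ⇑e ⇑e := by
            rw [Matrix.submatrix_mul_equiv, Matrix.submatrix_mul_equiv]
        _ = Jmat (n + 1) := by rw [hW, he]; exact fromBlocks_ee n

lemma det_Jmat (N : ℕ) : (Jmat N).det = 1 := by
  induction N with
  | zero =>
    haveI : IsEmpty (Fin (2 * 0)) := ⟨fun i => absurd i.2 (by omega)⟩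
    rw [Matrix.det_isEmpty]
  | succ n ih =>
    rw [← fromBlocks_ee n, Matrix.det_submatrix_equiv_self, Matrix.det_fromBlocks_zero₂₁,
      det_J2, ih, one_mul]

def ValidP (N : ℕ) (σ : Equiv.Perm (Fin (2 * N))) : Prop :=
  ∀ i : Fin N, (σ (pe N (i, 0))).1 / 2 = (σ (pe N (i, 1))).1 / 2

lemma Jv_eq_zero {a b : ℕ} (h : a / 2 ≠ b / 2) : Jv a b = 0 := by
  unfold Jv; split_ifs <;> first | rfl | (exfalso; omega)

lemma Jv_pair1 (m : ℕ) : Jv (2 * m) (2 * m + 1) = 1 := by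
  unfold Jv; split_ifs <;> first | rfl | (exfalso; omega)

lemma Jv_pair2 (m : ℕ) : Jv (2 * m + 1) (2 * m) = -1 := by
  unfold Jv; split_ifs <;> first | rfl | (exfalso; omega)

lemma pe_val0 (N : ℕ) (a : Fin N) : (pe N (a, 0)).1 = 2 * a.1 := rfl
lemma pe_val1 (N : ℕ) (a : Fin N) : (pe N (a, 1)).1 = 2 * a.1 + 1 := rfl

def gf (N : ℕ) (σ : Equiv.Perm (Fin (2 * N))) (i : Fin N) : Fin N :=
  ⟨(σ (pe N (i, 0))).1 / 2, by have := (σ (pe N (i, 0))).2; omega⟩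

lemma pair_vals (N : ℕ) (σ : Equiv.Perm (Fin (2 * N))) (h : ValidP N σ) (i : Fin N) :
    (σ (pe N (i, 0)) = pe N (gf N σ i, 0) ∧ σ (pe N (i, 1)) = pe N (gf N σ i, 1)) ∨
    (σ (pe N (i, 0)) = pe N (gf N σ i, 1) ∧ σ (pe N (i, 1)) = pe N (gf N σ i, 0)) := by
  have hne : (σ (pe N (i, 0))).1 ≠ (σ (pe N (i, 1))).1 := by
    intro hcon
    have h2 : σ (pe N (i, 0)) = σ (pe N (i, 1)) := Fin.ext hcon
    have h4 := (pe N).injective (σ.injective h2)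
    have h5 : (0 : Fin 2) = 1 := congrArg Prod.snd h4
    exact absurd h5 (by decide)
  have hv := h i
  have hgf : (gf N σ i).1 = (σ (pe N (i, 0))).1 / 2 := rfl
  by_cases hpar : (σ (pe N (i, 0))).1 % 2 = 0
  · left
    refine ⟨Fin.ext ?_, Fin.ext ?_⟩
    · rw [pe_val0]; omega
    · rw [pe_val1]; omega
  · right
    refine ⟨Fin.ext ?_, Fin.ext ?_⟩
    · rw [pe_val1]; omega
    · rw [pe_val0]; omega

lemma gf_inv_gf (N : ℕ) (σ : Equiv.Perm (Fin (2 * N))) (h : ValidP N σ) (i : Fin N) :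
    gf N σ⁻¹ (gf N σ i) = i := by
  rcases pair_vals N σ h i with ⟨h0, _⟩ | ⟨_, h1⟩
  · apply Fin.ext
    show (σ⁻¹ (pe N (gf N σ i, 0))).1 / 2 = i.1
    rw [← h0, Equiv.Perm.inv_def, Equiv.symm_apply_apply, pe_val0]
    omega
  · apply Fin.ext
    show (σ⁻¹ (pe N (gf N σ i, 0))).1 / 2 = i.1
    rw [← h1, Equiv.Perm.inv_def, Equiv.symm_apply_apply, pe_val1]
    omega

lemma valid_inv (N : ℕ) (σ : Equiv.Perm (Fin (2 * N))) (h : ValidP N σ) : ValidP N σ⁻¹ := by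
  intro j
  obtain ⟨i, s, hx⟩ : ∃ i s, σ⁻¹ (pe N (j, 0)) = pe N (i, s) :=
    ⟨((pe N).symm (σ⁻¹ (pe N (j, 0)))).1, ((pe N).symm (σ⁻¹ (pe N (j, 0)))).2,
      ((pe N).apply_symm_apply _).symm⟩
  have hlt := s.2
  have hs : s = 0 ∨ s = 1 := by
    rcases (show s.1 = 0 ∨ s.1 = 1 by omega) with h' | h'
    · exact Or.inl (Fin.ext h')
    · exact Or.inr (Fin.ext h')
  have hσx : σ (σ⁻¹ (pe N (j, 0))) = pe N (j, 0) := Equiv.apply_symm_apply σ _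
  rcases pair_vals N σ h i with ⟨h0, h1⟩ | ⟨h0, h1⟩ <;> rcases hs with rfl | rfl
  · have hj : gf N σ i = j := by
      have hq : pe N (gf N σ i, 0) = pe N (j, 0) := by rw [← h0, ← hx, hσx]
      exact congrArg Prod.fst ((pe N).injective hq)
    have hy : σ⁻¹ (pe N (j, 1)) = pe N (i, 1) := by
      rw [← hj, ← h1, Equiv.Perm.inv_def, Equiv.symm_apply_apply]
    rw [hx, hy, pe_val0, pe_val1]
    omega
  · exfalso
    have hq : pe N (gf N σ i, 1) = pe N (j, 0) := by rw [← h1, ← hx, hσx]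
    have h5 : (1 : Fin 2) = 0 := congrArg Prod.snd ((pe N).injective hq)
    exact absurd h5 (by decide)
  · exfalso
    have hq : pe N (gf N σ i, 1) = pe N (j, 0) := by rw [← h0, ← hx, hσx]
    have h5 : (1 : Fin 2) = 0 := congrArg Prod.snd ((pe N).injective hq)
    exact absurd h5 (by decide)
  · have hj : gf N σ i = j := by
      have hq : pe N (gf N σ i, 0) = pe N (j, 0) := by rw [← h1, ← hx, hσx]
      exact congrArg Prod.fst ((pe N).injective hq)
    have hy : σ⁻¹ (pe N (j, 1)) = pe N (i, 0) := by
      rw [← hj, ← h0, Equiv.Perm.inv_def, Equiv.symm_apply_apply]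
    rw [hx, hy, pe_val0, pe_val1]
    omega

def Ψp (N : ℕ) (g : Equiv.Perm (Fin N)) (ε : Fin N → Bool) : Equiv.Perm (Fin (2 * N)) :=
  (pe N).permCongr
    ((Equiv.prodCongrRight
        (fun i => if ε i then Equiv.swap (0 : Fin 2) 1 else Equiv.refl (Fin 2))).trans
      (Equiv.prodCongrLeft (fun _ : Fin 2 => g)))

lemma Ψp_apply (N : ℕ) (g : Equiv.Perm (Fin N)) (ε : Fin N → Bool) (i : Fin N) (s : Fin 2) :
    Ψp N g ε (pe N (i, s))
      = pe N (g i, if ε i then Equiv.swap (0 : Fin 2) 1 s else s) := by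
  unfold Ψp
  rw [Equiv.permCongr_apply, Equiv.symm_apply_apply, Equiv.trans_apply,
    Equiv.prodCongrRight_apply]
  congr 1
  by_cases hε : ε i <;> simp [hε, Equiv.prodCongrLeft]

lemma Ψp_apply0 (N : ℕ) (g : Equiv.Perm (Fin N)) (ε : Fin N → Bool) (i : Fin N) :
    Ψp N g ε (pe N (i, 0)) = pe N (g i, if ε i then 1 else 0) := by
  rw [Ψp_apply]
  by_cases hε : ε i <;> simp [hε, Equiv.swap_apply_left]

lemma Ψp_apply1 (N : ℕ) (g : Equiv.Perm (Fin N)) (ε : Fin N → Bool) (i : Fin N) :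
    Ψp N g ε (pe N (i, 1)) = pe N (g i, if ε i then 0 else 1) := by
  rw [Ψp_apply]
  by_cases hε : ε i <;> simp [hε, Equiv.swap_apply_right]

lemma sign_Ψp (N : ℕ) (g : Equiv.Perm (Fin N)) (ε : Fin N → Bool) :
    Equiv.Perm.sign (Ψp N g ε) = ∏ i : Fin N, (if ε i then (-1 : ℤˣ) else 1) := by
  unfold Ψp
  rw [Equiv.Perm.sign_permCongr]
  have hmul : ((Equiv.prodCongrRight
        (fun i => if ε i then Equiv.swap (0 : Fin 2) 1 else Equiv.refl (Fin 2))).trans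
      (Equiv.prodCongrLeft (fun _ : Fin 2 => g)))
      = (Equiv.prodCongrLeft (fun _ : Fin 2 => (g : Equiv.Perm (Fin N))))
        * (Equiv.prodCongrRight
            (fun i => if ε i then Equiv.swap (0 : Fin 2) 1 else Equiv.refl (Fin 2))) := rfl
  rw [hmul, Equiv.Perm.sign_mul, Equiv.Perm.sign_prodCongrLeft,
    Equiv.Perm.sign_prodCongrRight]
  have h1 : (∏ _k : Fin 2, Equiv.Perm.sign g) = 1 := by
    rw [Fin.prod_univ_two, Int.units_mul_self]
  rw [h1, one_mul]
  refine Finset.prod_congr rfl fun i _ => ?_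
  by_cases hε : ε i <;> simp [hε, Equiv.Perm.sign_swap (show (0 : Fin 2) ≠ 1 by decide)]

lemma valid_Ψp (N : ℕ) (g : Equiv.Perm (Fin N)) (ε : Fin N → Bool) : ValidP N (Ψp N g ε) := by
  intro i
  rw [Ψp_apply0, Ψp_apply1]
  by_cases hε : ε i
  · rw [if_pos hε, if_pos hε, pe_val1, pe_val0]; omega
  · rw [if_neg hε, if_neg hε, pe_val0, pe_val1]; omega

lemma gf_Ψp (N : ℕ) (g : Equiv.Perm (Fin N)) (ε : Fin N → Bool) (i : Fin N) :
    gf N (Ψp N g ε) i = g i := by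
  apply Fin.ext
  show (Ψp N g ε (pe N (i, 0))).1 / 2 = (g i).1
  rw [Ψp_apply0]
  by_cases hε : ε i
  · rw [if_pos hε, pe_val1]; omega
  · rw [if_neg hε, pe_val0]; omega

lemma eps_Ψp (N : ℕ) (g : Equiv.Perm (Fin N)) (ε : Fin N → Bool) (i : Fin N) :
    decide ((Ψp N g ε (pe N (i, 0))).1 % 2 = 1) = ε i := by
  rw [Ψp_apply0]
  by_cases hε : ε i
  · rw [if_pos hε, pe_val1, hε]
    simp only [decide_eq_true_eq]
    omega
  · rw [if_neg hε, pe_val0]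
    rw [Bool.eq_false_iff.mpr hε]
    simp only [decide_eq_false_iff_not]
    omega

lemma term_Ψp (N : ℕ) (g : Equiv.Perm (Fin N)) (ε : Fin N → Bool) :
    ((Equiv.Perm.sign (Ψp N g ε) : ℤ) : ℂ)
      * ∏ i : Fin N, Jmat N (Ψp N g ε (pe N (i, 0))) (Ψp N g ε (pe N (i, 1))) = 1 := by
  classical
  have hgenC : (∏ i : Fin N, (if ε i then (-1 : ℂ) else 1))
      = (-1 : ℂ) ^ (Finset.univ.filter (fun i => ε i = true)).card := by
    rw [Finset.prod_ite, Finset.prod_const, Finset.prod_const, one_pow, mul_one]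
  have hgenU : (∏ i : Fin N, (if ε i then (-1 : ℤˣ) else 1))
      = (-1 : ℤˣ) ^ (Finset.univ.filter (fun i => ε i = true)).card := by
    rw [Finset.prod_ite, Finset.prod_const, Finset.prod_const, one_pow, mul_one]
  have hprod : (∏ i : Fin N, Jmat N (Ψp N g ε (pe N (i, 0))) (Ψp N g ε (pe N (i, 1))))
      = ∏ i : Fin N, (if ε i then (-1 : ℂ) else 1) := by
    refine Finset.prod_congr rfl fun i _ => ?_
    rw [Ψp_apply0, Ψp_apply1]
    by_cases hε : ε i
    · rw [if_pos hε, if_pos hε, if_pos hε]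
      show Jv (2 * (g i).1 + 1) (2 * (g i).1) = -1
      exact Jv_pair2 _
    · rw [if_neg hε, if_neg hε, if_neg hε]
      show Jv (2 * (g i).1) (2 * (g i).1 + 1) = 1
      exact Jv_pair1 _
  have hsign : ((Equiv.Perm.sign (Ψp N g ε) : ℤ) : ℂ)
      = (-1 : ℂ) ^ (Finset.univ.filter (fun i => ε i = true)).card := by
    rw [sign_Ψp, hgenU]
    push_cast
    ring
  rw [hprod, hgenC, hsign, ← pow_add]
  have h2 : (Finset.univ.filter (fun i => ε i = true)).card
      + (Finset.univ.filter (fun i => ε i = true)).card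
      = 2 * (Finset.univ.filter (fun i => ε i = true)).card := by ring
  rw [h2, pow_mul]
  norm_num

lemma Ψp_round (N : ℕ) (σ : Equiv.Perm (Fin (2 * N))) (h : ValidP N σ) :
    Ψp N ⟨gf N σ, gf N σ⁻¹, gf_inv_gf N σ h, gf_inv_gf N σ⁻¹ (valid_inv N σ h)⟩
      (fun i => decide ((σ (pe N (i, 0))).1 % 2 = 1)) = σ := by
  apply Equiv.ext
  intro x
  obtain ⟨i, s, rfl⟩ : ∃ i s, x = pe N (i, s) :=
    ⟨((pe N).symm x).1, ((pe N).symm x).2, ((pe N).apply_symm_apply x).symm⟩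
  have hlt := s.2
  have hs : s = 0 ∨ s = 1 := by
    rcases (show s.1 = 0 ∨ s.1 = 1 by omega) with h' | h'
    · exact Or.inl (Fin.ext h')
    · exact Or.inr (Fin.ext h')
  rcases pair_vals N σ h i with ⟨h0, h1⟩ | ⟨h0, h1⟩ <;> rcases hs with rfl | rfl
  · rw [Ψp_apply0]
    have hdec : (decide ((σ (pe N (i, 0))).1 % 2 = 1)) = false := by
      rw [h0, pe_val0]
      simp only [decide_eq_false_iff_not]
      omega
    rw [hdec]
    simp only [Bool.false_eq_true, if_false]
    exact h0.symm
  · rw [Ψp_apply1]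
    have hdec : (decide ((σ (pe N (i, 0))).1 % 2 = 1)) = false := by
      rw [h0, pe_val0]
      simp only [decide_eq_false_iff_not]
      omega
    rw [hdec]
    simp only [Bool.false_eq_true, if_false]
    exact h1.symm
  · rw [Ψp_apply0]
    have hdec : (decide ((σ (pe N (i, 0))).1 % 2 = 1)) = true := by
      rw [h0, pe_val1]
      simp only [decide_eq_true_eq]
      omega
    rw [hdec]
    simp only [if_true]
    exact h0.symm
  · rw [Ψp_apply1]
    have hdec : (decide ((σ (pe N (i, 0))).1 % 2 = 1)) = true := by
      rw [h0, pe_val1]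
      simp only [decide_eq_true_eq]
      omega
    rw [hdec]
    simp only [if_true]
    exact h1.symm

lemma sPf_Jmat (N : ℕ) : sPf N (Jmat N) = (2 : ℂ) ^ N * N.factorial := by
  classical
  unfold sPf
  have hsub : ∑ σ : Equiv.Perm (Fin (2 * N)), ((Equiv.Perm.sign σ : ℤ) : ℂ)
        * ∏ i : Fin N, Jmat N (σ (pe N (i, 0))) (σ (pe N (i, 1)))
      = ∑ σ ∈ Finset.univ.filter (fun σ => ValidP N σ), ((Equiv.Perm.sign σ : ℤ) : ℂ)
        * ∏ i : Fin N, Jmat N (σ (pe N (i, 0))) (σ (pe N (i, 1))) := by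
    refine (Finset.sum_subset (Finset.filter_subset _ _) ?_).symm
    intro σ _ hσ
    simp only [Finset.mem_filter, Finset.mem_univ, true_and] at hσ
    unfold ValidP at hσ
    push_neg at hσ
    obtain ⟨i, hi⟩ := hσ
    have hz : Jmat N (σ (pe N (i, 0))) (σ (pe N (i, 1))) = 0 := Jv_eq_zero hi
    rw [Finset.prod_eq_zero (Finset.mem_univ i) hz, mul_zero]
  have key : ∑ _p : Equiv.Perm (Fin N) × (Fin N → Bool), (1 : ℂ)
      = ∑ σ ∈ Finset.univ.filter (fun σ => ValidP N σ), ((Equiv.Perm.sign σ : ℤ) : ℂ)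
        * ∏ i : Fin N, Jmat N (σ (pe N (i, 0))) (σ (pe N (i, 1))) := by
    refine Finset.sum_bij' (fun p _ => Ψp N p.1 p.2)
      (fun σ hσ => (⟨gf N σ, gf N σ⁻¹,
          gf_inv_gf N σ (Finset.mem_filter.1 hσ).2,
          gf_inv_gf N σ⁻¹ (valid_inv N σ (Finset.mem_filter.1 hσ).2)⟩,
        fun i => decide ((σ (pe N (i, 0))).1 % 2 = 1)))
      ?_ ?_ ?_ ?_ ?_
    · intro p _
      simp only [Finset.mem_filter, Finset.mem_univ, true_and]
      exact valid_Ψp N p.1 p.2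
    · intro σ hσ
      exact Finset.mem_univ _
    · intro p _
      refine Prod.ext ?_ ?_
      · apply Equiv.ext
        intro i
        exact gf_Ψp N p.1 p.2 i
      · funext i
        exact eps_Ψp N p.1 p.2 i
    · intro σ hσ
      exact Ψp_round N σ (Finset.mem_filter.1 hσ).2
    · intro p _
      exact (term_Ψp N p.1 p.2).symm
  rw [hsub, ← key, Finset.sum_const, Finset.card_univ, Fintype.card_prod, Fintype.card_perm,
    Fintype.card_fun, Fintype.card_fin, Fintype.card_bool, nsmul_eq_mul, mul_one]
  push_cast
  ring

theorem sPf_sq (N : ℕ) (A : Matrix (Fin (2 * N)) (Fin (2 * N)) ℂ) (hskew : Aᵀ = -A) :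
    sPf N A ^ 2 = ((2 : ℂ) ^ N * N.factorial) ^ 2 * A.det := by
  by_cases hd : IsUnit A.det
  · obtain ⟨U, hU, hUA⟩ := skew_normal N A hskew hd
    have h1 : sPf N (Uᵀ * A * U) = U.det * sPf N A := sPf_conj N U A
    rw [hUA, sPf_Jmat] at h1
    have h2 : (Uᵀ * A * U).det = U.det ^ 2 * A.det := by
      rw [Matrix.det_mul, Matrix.det_mul, Matrix.det_transpose]; ring
    rw [hUA, det_Jmat] at h2
    calc sPf N A ^ 2 = sPf N A ^ 2 * (U.det ^ 2 * A.det) := by rw [← h2]; ring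
      _ = (U.det * sPf N A) ^ 2 * A.det := by ring
      _ = ((2 : ℂ) ^ N * N.factorial) ^ 2 * A.det := by rw [← h1]
  · have h0 : A.det = 0 := by
      by_contra h
      exact hd (isUnit_iff_ne_zero.mpr h)
    rw [sPf_eq_zero_of_det_eq_zero N A hskew h0, h0]
    ring

theorem pfaffian_sq (N : ℕ) (A : Matrix (Fin (2 * N)) (Fin (2 * N)) ℂ) (hskew : Aᵀ = -A) :
    pfaffian N A ^ 2 = A.det := by
  have hc : ((2 : ℂ) ^ N * N.factorial) ≠ 0 :=
    mul_ne_zero (pow_ne_zero _ two_ne_zero) (Nat.cast_ne_zero.mpr N.factorial_ne_zero)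
  have hkey : (1 / ((2 : ℂ) ^ N * N.factorial)) ^ 2 * (((2 : ℂ) ^ N * N.factorial) ^ 2 * A.det)
      = A.det := by
    field_simp [Nat.factorial_ne_zero]
  rw [pfaffian_eq_sPf, mul_pow, sPf_sq N A hskew, hkey]

end PfAux

section NormFacts

open scoped Matrix.Norms.L2Operator

lemma opNorm_eq_l2 {m n : Type*} [Fintype m] [Fintype n] [DecidableEq n] (A : Matrix m n ℂ) :
    opNorm A = ‖A‖ := rfl

lemma norm_det_le {n : Type*} [Fintype n] [DecidableEq n] [Nonempty n] (B : Matrix n n ℂ) :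
    ‖B.det‖ ≤ ‖B‖ ^ (Fintype.card n) := by
  haveI : Nontrivial (EuclideanSpace ℂ n) := inferInstance
  haveI : NormOneClass (Matrix n n ℂ) := ⟨by
    rw [Matrix.cstar_norm_def, _root_.map_one, ContinuousLinearMap.one_def,
      ContinuousLinearMap.norm_id]⟩
  haveI : CompleteSpace (Matrix n n ℂ) := FiniteDimensional.complete ℂ _
  have hroot : ∀ μ ∈ (Matrix.charpoly B).roots, ‖μ‖₊ ≤ ‖B‖₊ := by
    intro μ hμ
    have hIsRoot : (Matrix.charpoly B).IsRoot μ := Polynomial.isRoot_of_mem_roots hμ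
    have hdet : (Matrix.scalar n μ - B).det = 0 := by
      have h1 : Polynomial.eval μ (Matrix.charpoly B) = (Matrix.scalar n μ - B).det := by
        rw [Matrix.charpoly, eval_det, Matrix.matPolyEquiv_charmatrix]
        rw [Polynomial.eval_sub, Polynomial.eval_X, Polynomial.eval_C]
      rw [← h1]
      exact hIsRoot
    have hmem : μ ∈ spectrum ℂ B := by
      rw [spectrum.mem_iff, Matrix.isUnit_iff_isUnit_det, isUnit_iff_ne_zero, not_not]
      have halg : algebraMap ℂ (Matrix n n ℂ) μ = Matrix.scalar n μ := rfl
      rw [halg]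
      exact hdet
    have h2 : ‖μ‖ ≤ ‖B‖ := spectrum.norm_le_norm_of_mem hmem
    rw [← coe_nnnorm, ← coe_nnnorm, NNReal.coe_le_coe] at h2
    exact h2
  have hcard : Multiset.card (Matrix.charpoly B).roots = Fintype.card n := by
    have h := Polynomial.Splits.natDegree_eq_card_roots (IsAlgClosed.splits (Matrix.charpoly B))
    rw [Matrix.charpoly_natDegree_eq_dim] at h
    exact h.symm
  have hdetprod : B.det = (Matrix.charpoly B).roots.prod := Matrix.det_eq_prod_roots_charpoly B
  have hnn : ‖B.det‖₊ ≤ ‖B‖₊ ^ Fintype.card n := by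
    rw [hdetprod]
    have h1 : ‖(Matrix.charpoly B).roots.prod‖₊
        = ((Matrix.charpoly B).roots.map (fun z => ‖z‖₊)).prod := by
      exact map_multiset_prod (nnnormHom : ℂ →*₀ NNReal) _
    rw [h1]
    have h2 := Multiset.prod_le_pow_card ((Matrix.charpoly B).roots.map (fun z => ‖z‖₊)) ‖B‖₊ ?_
    · rwa [Multiset.card_map, hcard] at h2
    · intro x hx
      obtain ⟨μ, hμ, rfl⟩ := Multiset.mem_map.1 hx
      exact hroot μ hμ
  calc ‖B.det‖ = ((‖B.det‖₊ : NNReal) : ℝ) := (coe_nnnorm _).symm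
    _ ≤ ((‖B‖₊ ^ Fintype.card n : NNReal) : ℝ) := NNReal.coe_le_coe.mpr hnn
    _ = ‖B‖ ^ Fintype.card n := by
        rw [NNReal.coe_pow, coe_nnnorm]

lemma norm_map_conj_le {m n : Type*} [Fintype m] [Fintype n] [DecidableEq n]
    (A : Matrix m n ℂ) : ‖A.map (starRingEnd ℂ)‖ ≤ ‖A‖ := by
  rw [Matrix.l2_opNorm_def]
  refine ContinuousLinearMap.opNorm_le_bound _ (norm_nonneg _) fun x => ?_
  set w : n → ℂ := fun j => (starRingEnd ℂ) (x j) with hw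
  set y : EuclideanSpace ℂ n := (WithLp.equiv 2 (n → ℂ)).symm w with hy
  have hny : ‖y‖ = ‖x‖ := by
    rw [EuclideanSpace.norm_eq, EuclideanSpace.norm_eq]
    congr 1
    refine Finset.sum_congr rfl fun j _ => ?_
    have : y j = (starRingEnd ℂ) (x j) := rfl
    rw [this, RCLike.norm_conj]
  have hterm : ∀ i : m,
      ‖(Matrix.toEuclideanLin (A.map (starRingEnd ℂ)) x) i‖
        = ‖(Matrix.toEuclideanLin A y) i‖ := by
    intro i
    have h1 : (Matrix.toEuclideanLin (A.map (starRingEnd ℂ)) x) i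
        = (starRingEnd ℂ) ((Matrix.toEuclideanLin A y) i) := by
      show ((A.map (starRingEnd ℂ)) *ᵥ (fun j => x j)) i = (starRingEnd ℂ) ((A *ᵥ w) i)
      simp only [Matrix.mulVec, dotProduct, Matrix.map_apply, _root_.map_sum,
        _root_.map_mul, hw]
      refine Finset.sum_congr rfl fun j _ => ?_
      rw [Complex.conj_conj]
    rw [h1, RCLike.norm_conj]
  have hle : ‖Matrix.toEuclideanLin (A.map (starRingEnd ℂ)) x‖
      = ‖Matrix.toEuclideanLin A y‖ := by
    rw [EuclideanSpace.norm_eq, EuclideanSpace.norm_eq]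
    congr 1
    exact Finset.sum_congr rfl fun i _ => by rw [hterm i]
  have hfin : ‖Matrix.toEuclideanLin A y‖ ≤ ‖A‖ * ‖y‖ := by
    have hb := Matrix.l2_opNorm_mulVec A y
    have hrfl : (EuclideanSpace.equiv m ℂ).symm (A *ᵥ y) = Matrix.toEuclideanLin A y := rfl
    rwa [hrfl] at hb
  show ‖Matrix.toEuclideanLin (A.map (starRingEnd ℂ)) x‖ ≤ ‖A‖ * ‖x‖
  rw [hle, ← hny]
  exact hfin

lemma norm_transpose_eq {m n : Type*} [Fintype m] [Fintype n] [DecidableEq n] [DecidableEq m]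
    (A : Matrix m n ℂ) : ‖Aᵀ‖ = ‖A‖ := by
  have key : ∀ (p q : Type) [Fintype p] [Fintype q] [DecidableEq q] (M : Matrix p q ℂ),
      ‖M.map (starRingEnd ℂ)‖ ≤ ‖M‖ := fun p q _ _ _ M => norm_map_conj_le M
  have h1 : Aᵀ = (A.map (starRingEnd ℂ))ᴴ := by
    ext i j
    simp [Matrix.conjTranspose_apply, Matrix.map_apply]
  rw [h1, Matrix.l2_opNorm_conjTranspose]
  have h2 : ‖A.map (starRingEnd ℂ)‖ ≤ ‖A‖ := norm_map_conj_le A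
  have h3 : ‖A‖ ≤ ‖A.map (starRingEnd ℂ)‖ := by
    have h4 : (A.map (starRingEnd ℂ)).map (starRingEnd ℂ) = A := by
      ext i j
      simp [Matrix.map_apply]
    calc ‖A‖ = ‖(A.map (starRingEnd ℂ)).map (starRingEnd ℂ)‖ := by rw [h4]
      _ ≤ ‖A.map (starRingEnd ℂ)‖ := norm_map_conj_le _
  exact le_antisymm h2 h3

lemma norm_blockSum_le {M N : ℕ}
    (W : Fin N → Matrix (Fin M) (Fin M) ℂ) (S : Fin N → Finset (Fin M))
    (hsupp : ∀ t, SupportedOn (S t) (W t))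
    (hdisj : ∀ t t', t ≠ t' → Disjoint (S t) (S t'))
    (hWnorm : ∀ t, ‖W t‖ ≤ 1)
    (b : Fin N → ℝ) (hb : ∀ t, b t = 1 ∨ b t = -1) :
    ‖∑ t : Fin N, (b t : ℂ) • W t‖ ≤ 1 := by
  classical
  rw [Matrix.l2_opNorm_def]
  refine ContinuousLinearMap.opNorm_le_bound _ zero_le_one fun x => ?_
  rw [one_mul]
  show ‖Matrix.toEuclideanLin (∑ t : Fin N, (b t : ℂ) • W t) x‖ ≤ ‖x‖
  set v : Fin M → ℂ := fun j => x j with hv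
  set vt : Fin N → (Fin M → ℂ) := fun t j => if j ∈ S t then v j else 0 with hvt
  have hWv : ∀ t, (W t) *ᵥ v = (W t) *ᵥ (vt t) := by
    intro t
    funext i
    simp only [Matrix.mulVec, dotProduct, hvt]
    refine Finset.sum_congr rfl fun j _ => ?_
    by_cases hj : j ∈ S t
    · rw [if_pos hj]
    · rw [if_neg hj, hsupp t i j (Or.inr hj)]
      simp
  have hrowzero : ∀ t i, i ∉ S t → ((W t) *ᵥ v) i = 0 := by
    intro t i hi
    simp only [Matrix.mulVec, dotProduct]
    refine Finset.sum_eq_zero fun j _ => ?_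
    rw [hsupp t i j (Or.inl hi), zero_mul]
  have hentry : ∀ i, ‖((∑ t : Fin N, (b t : ℂ) • W t) *ᵥ v) i‖ ^ 2
      ≤ ∑ t : Fin N, ‖((W t) *ᵥ v) i‖ ^ 2 := by
    intro i
    have hsum : ((∑ t : Fin N, (b t : ℂ) • W t) *ᵥ v) i
        = ∑ t : Fin N, (b t : ℂ) * (((W t) *ᵥ v) i) := by
      simp only [Matrix.mulVec, dotProduct, Matrix.sum_apply, Matrix.smul_apply,
        smul_eq_mul, Finset.sum_mul, Finset.mul_sum]
      rw [Finset.sum_comm]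
      exact Finset.sum_congr rfl fun t _ => Finset.sum_congr rfl fun j _ => by ring
    rw [hsum]
    by_cases hex : ∃ t, i ∈ S t
    · obtain ⟨t₀, ht₀⟩ := hex
      have hz : ∀ t ∈ Finset.univ, t ≠ t₀ → (b t : ℂ) * (((W t) *ᵥ v) i) = 0 := by
        intro t _ ht
        have hiS : i ∉ S t := fun h => (Finset.disjoint_left.1 (hdisj t t₀ ht) h) ht₀
        rw [hrowzero t i hiS, mul_zero]
      rw [Finset.sum_eq_single t₀ hz (fun h => absurd (Finset.mem_univ _) h)]
      have hb0 : ‖(b t₀ : ℂ)‖ = 1 := by rcases hb t₀ with h | h <;> rw [h] <;> simp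
      rw [norm_mul, hb0, one_mul]
      exact Finset.single_le_sum (f := fun t => ‖((W t) *ᵥ v) i‖ ^ 2)
        (fun t _ => sq_nonneg _) (Finset.mem_univ t₀)
    · push_neg at hex
      rw [Finset.sum_eq_zero (fun t _ => by rw [hrowzero t i (hex t), mul_zero])]
      have : (0 : ℝ) ≤ ∑ t : Fin N, ‖((W t) *ᵥ v) i‖ ^ 2 :=
        Finset.sum_nonneg fun t _ => sq_nonneg _
      simpa using this
  have hsq : ‖Matrix.toEuclideanLin (∑ t : Fin N, (b t : ℂ) • W t) x‖ ^ 2 ≤ ‖x‖ ^ 2 := by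
    have hxnorm : ‖x‖ ^ 2 = ∑ j, ‖x j‖ ^ 2 := by
      rw [EuclideanSpace.norm_eq, Real.sq_sqrt]
      positivity
    have hLnorm : ‖Matrix.toEuclideanLin (∑ t : Fin N, (b t : ℂ) • W t) x‖ ^ 2
        = ∑ i, ‖((∑ t : Fin N, (b t : ℂ) • W t) *ᵥ v) i‖ ^ 2 := by
      rw [EuclideanSpace.norm_eq, Real.sq_sqrt]
      · rfl
      · positivity
    have hterm : ∀ t, (∑ i, ‖((W t) *ᵥ v) i‖ ^ 2) ≤ ∑ j, ‖(vt t) j‖ ^ 2 := by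
      intro t
      set xt : EuclideanSpace ℂ (Fin M) := (WithLp.equiv 2 (Fin M → ℂ)).symm (vt t) with hxt
      have hxtnorm : ‖xt‖ ^ 2 = ∑ j, ‖(vt t) j‖ ^ 2 := by
        rw [EuclideanSpace.norm_eq, Real.sq_sqrt]
        · rfl
        · positivity
      have hWnormsq : (∑ i, ‖((W t) *ᵥ v) i‖ ^ 2) = ‖Matrix.toEuclideanLin (W t) xt‖ ^ 2 := by
        rw [EuclideanSpace.norm_eq, Real.sq_sqrt]
        · rw [hWv t]
          rfl
        · positivity
      rw [hWnormsq, ← hxtnorm]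
      have hb1 : ‖Matrix.toEuclideanLin (W t) xt‖ ≤ ‖xt‖ := by
        have hb2 := Matrix.l2_opNorm_mulVec (W t) xt
        have hrfl : (EuclideanSpace.equiv (Fin M) ℂ).symm ((W t) *ᵥ xt)
            = Matrix.toEuclideanLin (W t) xt := rfl
        rw [hrfl] at hb2
        calc ‖Matrix.toEuclideanLin (W t) xt‖ ≤ ‖W t‖ * ‖xt‖ := hb2
          _ ≤ 1 * ‖xt‖ := mul_le_mul_of_nonneg_right (hWnorm t) (norm_nonneg _)
          _ = ‖xt‖ := one_mul _
      exact pow_le_pow_left₀ (norm_nonneg _) hb1 2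
    have hlast : (∑ t : Fin N, ∑ j, ‖(vt t) j‖ ^ 2) ≤ ∑ j, ‖v j‖ ^ 2 := by
      rw [Finset.sum_comm]
      refine Finset.sum_le_sum fun j _ => ?_
      by_cases hex : ∃ t, j ∈ S t
      · obtain ⟨t₀, ht₀⟩ := hex
        have hz : ∀ t ∈ Finset.univ, t ≠ t₀ → ‖(vt t) j‖ ^ 2 = 0 := by
          intro t _ ht
          have hjS : j ∉ S t := fun h => (Finset.disjoint_left.1 (hdisj t t₀ ht) h) ht₀
          simp [hvt, hjS]
        rw [Finset.sum_eq_single t₀ hz (fun h => absurd (Finset.mem_univ _) h)]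
        simp [hvt, ht₀]
      · push_neg at hex
        rw [Finset.sum_eq_zero (fun t _ => by simp [hvt, hex t])]
        positivity
    calc ‖Matrix.toEuclideanLin (∑ t : Fin N, (b t : ℂ) • W t) x‖ ^ 2
        = ∑ i, ‖((∑ t : Fin N, (b t : ℂ) • W t) *ᵥ v) i‖ ^ 2 := hLnorm
      _ ≤ ∑ i, ∑ t : Fin N, ‖((W t) *ᵥ v) i‖ ^ 2 := Finset.sum_le_sum fun i _ => hentry i
      _ = ∑ t : Fin N, ∑ i, ‖((W t) *ᵥ v) i‖ ^ 2 := Finset.sum_comm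
      _ ≤ ∑ t : Fin N, ∑ j, ‖(vt t) j‖ ^ 2 := Finset.sum_le_sum fun t _ => hterm t
      _ ≤ ∑ j, ‖v j‖ ^ 2 := hlast
      _ = ‖x‖ ^ 2 := hxnorm.symm
  rw [← Real.sqrt_sq (norm_nonneg (Matrix.toEuclideanLin (∑ t : Fin N, (b t : ℂ) • W t) x)),
    ← Real.sqrt_sq (norm_nonneg x)]
  exact Real.sqrt_le_sqrt hsq

end NormFacts

open scoped Matrix.Norms.L2Operator in
/-- if `W_1,…,W_N` are `M×M` skew-symmetric matrices supported on mutually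
disjoint blocks with `‖W_t‖_op ≤ 1`, and `‖X‖_op ≤ L` with `X` of size `M × 2N`, then for
every sign vector `b ∈ {±1}^N`, `|pf(Xᵀ (∑ b_t W_t) X)| ≤ L^{2N}`. -/
theorem pfaffian_bound_disjoint_blocks (M N : ℕ) (L : ℝ)
    (W : Fin N → Matrix (Fin M) (Fin M) ℂ) (S : Fin N → Finset (Fin M))
    (hsupp : ∀ t, SupportedOn (S t) (W t))
    (hdisj : ∀ t t', t ≠ t' → Disjoint (S t) (S t'))
    (hskew : ∀ t, (W t)ᵀ = -(W t))
    (hWnorm : ∀ t, opNorm (W t) ≤ 1)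
    (X : Matrix (Fin M) (Fin (2 * N)) ℂ) (hX : opNorm X ≤ L)
    (b : Fin N → ℝ) (hb : ∀ t, b t = 1 ∨ b t = -1) :
    ‖pfaffian N (Xᵀ * (∑ t : Fin N, (b t : ℂ) • W t) * X)‖ ≤ L ^ (2 * N) := by
  classical
  rw [opNorm_eq_l2] at hX
  have hWnorm' : ∀ t, ‖W t‖ ≤ 1 := fun t => by
    rw [← opNorm_eq_l2]; exact hWnorm t
  have hL0 : (0 : ℝ) ≤ L := le_trans (norm_nonneg X) hX
  set B := ∑ t : Fin N, (b t : ℂ) • W t with hB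
  have hBskew : Bᵀ = -B := by
    rw [hB, Matrix.transpose_sum]
    have : ∀ t : Fin N, ((b t : ℂ) • W t)ᵀ = -((b t : ℂ) • W t) := by
      intro t
      rw [Matrix.transpose_smul, hskew t, smul_neg]
    rw [Finset.sum_congr rfl fun t _ => this t, Finset.sum_neg_distrib]
  have hMskew : (Xᵀ * B * X)ᵀ = -(Xᵀ * B * X) := by
    calc (Xᵀ * B * X)ᵀ = Xᵀ * (Bᵀ * X) := by
          rw [Matrix.transpose_mul, Matrix.transpose_mul, Matrix.transpose_transpose]
      _ = -(Xᵀ * B * X) := by rw [hBskew, Matrix.neg_mul, Matrix.mul_neg, Matrix.mul_assoc]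
  have hpf2 := PfAux.pfaffian_sq N (Xᵀ * B * X) hMskew
  have hBnorm : ‖B‖ ≤ 1 := norm_blockSum_le W S hsupp hdisj hWnorm' b hb
  have hXT : ‖Xᵀ‖ ≤ L := by rw [norm_transpose_eq]; exact hX
  have hprod : ‖Xᵀ * B * X‖ ≤ L * L := by
    calc ‖Xᵀ * B * X‖ ≤ ‖Xᵀ * B‖ * ‖X‖ := Matrix.l2_opNorm_mul _ _
      _ ≤ (‖Xᵀ‖ * ‖B‖) * ‖X‖ :=
          mul_le_mul_of_nonneg_right (Matrix.l2_opNorm_mul _ _) (norm_nonneg _)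
      _ ≤ (L * 1) * L :=
          mul_le_mul (mul_le_mul hXT hBnorm (norm_nonneg _) hL0) hX (norm_nonneg _)
            (mul_nonneg hL0 zero_le_one)
      _ = L * L := by ring
  have hdet : ‖(Xᵀ * B * X).det‖ ≤ (L * L) ^ (2 * N) := by
    rcases Nat.eq_zero_or_pos N with hN | hN
    · subst hN
      haveI : IsEmpty (Fin (2 * 0)) := ⟨fun i => absurd i.2 (by omega)⟩
      rw [Matrix.det_isEmpty]
      simp
    · haveI : Nonempty (Fin (2 * N)) := ⟨⟨0, by omega⟩⟩
      calc ‖(Xᵀ * B * X).det‖ ≤ ‖Xᵀ * B * X‖ ^ (Fintype.card (Fin (2 * N))) := norm_det_le _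
        _ = ‖Xᵀ * B * X‖ ^ (2 * N) := by rw [Fintype.card_fin]
        _ ≤ (L * L) ^ (2 * N) := pow_le_pow_left₀ (norm_nonneg _) hprod _
  have hnorm2 : ‖pfaffian N (Xᵀ * B * X)‖ ^ 2 ≤ (L ^ (2 * N)) ^ 2 := by
    rw [← norm_pow, hpf2]
    calc ‖(Xᵀ * B * X).det‖ ≤ (L * L) ^ (2 * N) := hdet
      _ = (L ^ (2 * N)) ^ 2 := by ring
  have hfin : ‖pfaffian N (Xᵀ * B * X)‖ ≤ L ^ (2 * N) := by
    rw [← Real.sqrt_sq (norm_nonneg (pfaffian N (Xᵀ * B * X))),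
      ← Real.sqrt_sq (by positivity : (0 : ℝ) ≤ L ^ (2 * N))]
    exact Real.sqrt_le_sqrt hnorm2
  exact hfin
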